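/- Let n ≥ 1 and let y_1, …, y_n be nonnegative integers with ∑_{i=1}^n y_i = n − 1. Then there is exactly one r ∈ {0, 1, …, n−1} such that the cyclic shift (y'_1, …, y'_n) := (y_{r+1}, …, y_n, y_1, …, y_r) is a Łukasiewicz word, i.e. satisfies ∑_{i=1}^{j} (y'_i − 1) ≥ 0 for every 1 ≤ j ≤ n − 1. -/

import Mathlib

open Filter Topology

/-- **Cycle lemma.** If `y_0, …, y_{n-1}` are nonnegative integers with total sum
`n - 1`, then there is exactly one cyclic shift `r ∈ {0, …, n-1}` for which the
shifted sequence `y'_i = y_{(r+i) mod n}` is a Łukasiewicz word, i.e. all proper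
partial sums of `y'_i − 1` are nonnegative. -/
theorem cycle_lemma
    (n : ℕ) (hn : 1 ≤ n) (y : ℕ → ℕ)
    (hsum : (∑ i ∈ Finset.range n, y i) = n - 1) :
    ∃! r : ℕ, r < n ∧ ∀ j : ℕ, 1 ≤ j → j ≤ n - 1 →
      0 ≤ ∑ i ∈ Finset.range j, ((y ((r + i) % n) : ℤ) - 1) := by
  obtain ⟨m, rfl⟩ : ∃ m, n = m + 1 := ⟨n - 1, (Nat.succ_pred_eq_of_pos hn).symm⟩
  set n := m + 1 with hn' 
  set S : ℕ → ℤ := fun j => ∑ i ∈ Finset.range j, ((y (i % n) : ℤ) - 1) with hSdef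
  have hblock : ∀ j : ℕ, (∑ i ∈ Finset.range n, ((y ((j + i) % n) : ℤ))) = (n : ℤ) - 1 := by
    intro j
    induction j with
    | zero =>
      have h1 : ∀ i ∈ Finset.range n, ((y ((0 + i) % n) : ℤ)) = (y i : ℤ) := by
        intro i hi
        rw [Nat.zero_add, Nat.mod_eq_of_lt (Finset.mem_range.mp hi)]
      rw [Finset.sum_congr rfl h1, ← Nat.cast_sum]
      rw [hsum]
      push_cast
      omega
    | succ j ih =>
      set f : ℕ → ℤ := fun i => ((y ((j + i) % n) : ℤ)) with hf
      have h1 : ∀ i ∈ Finset.range n, ((y ((j + 1 + i) % n) : ℤ)) = f (i + 1) := by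
        intro i hi
        have he : j + 1 + i = j + (i + 1) := by omega
        simp only [hf, he]
      rw [Finset.sum_congr rfl h1]
      have h2 : f (m + 1) = f 0 := by
        simp only [hf, Nat.add_zero, Nat.add_mod_right]
        rw [← hn', Nat.add_mod_right]
      calc ∑ i ∈ Finset.range (m + 1), f (i + 1)
          = (∑ i ∈ Finset.range m, f (i + 1)) + f (m + 1) := Finset.sum_range_succ _ m
        _ = (∑ i ∈ Finset.range m, f (i + 1)) + f 0 := by rw [h2]
        _ = ∑ i ∈ Finset.range (m + 1), f i := (Finset.sum_range_succ' f m).symm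
        _ = (n : ℤ) - 1 := ih
  have hG : ∀ r j : ℕ, (∑ i ∈ Finset.range j, ((y ((r + i) % n) : ℤ) - 1)) = S (r + j) - S r := by
    intro r j
    have := Finset.sum_range_add (fun i => ((y (i % n) : ℤ) - 1)) r j
    simp only [hSdef]
    rw [this]
    ring
  have hperiod : ∀ j : ℕ, S (j + n) = S j - 1 := by
    intro j
    have h := Finset.sum_range_add (fun i => ((y (i % n) : ℤ) - 1)) j n
    simp only [hSdef]
    have hb2 : (∑ x ∈ Finset.range n, ((y ((j + x) % n) : ℤ) - 1)) = -1 := by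
      rw [Finset.sum_sub_distrib, hblock j, Finset.sum_const, Finset.card_range]
      push_cast
      ring
    rw [h, hb2]
    ring
  -- the minimum of S over range n
  have hTne : ((Finset.range n).image S).Nonempty := by
    refine Finset.Nonempty.image ?_ S
    exact ⟨0, Finset.mem_range.mpr (by omega)⟩
  set μ : ℤ := ((Finset.range n).image S).min' hTne with hμ
  have hmin : ∀ j, j < n → μ ≤ S j := by
    intro j hj
    exact Finset.min'_le _ _ (Finset.mem_image_of_mem S (Finset.mem_range.mpr hj))
  have hex : ∃ j, j < n ∧ S j = μ := by
    have := Finset.min'_mem ((Finset.range n).image S) hTne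
    rw [Finset.mem_image] at this
    obtain ⟨j, hj, hj2⟩ := this
    exact ⟨j, Finset.mem_range.mp hj, hj2⟩
  set r := Nat.find hex with hr
  obtain ⟨hrn, hrμ⟩ := Nat.find_spec hex
  have hfirst : ∀ j, j < r → μ + 1 ≤ S j := by
    intro j hj
    have h1 := Nat.find_min hex hj
    have h2 : j < n := lt_trans hj hrn
    have h3 : S j ≠ μ := fun h => h1 ⟨h2, h⟩
    have := hmin j h2
    omega
  refine ⟨r, ⟨hrn, ?_⟩, ?_⟩
  · intro j hj1 hj2
    rw [hG r j, hrμ]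
    by_cases hc : r + j < n
    · have := hmin (r + j) hc
      omega
    · push_neg at hc
      have hk : r + j = (r + j - n) + n := by omega
      have hkr : r + j - n < r := by omega
      have := hfirst (r + j - n) hkr
      rw [hk, hperiod]
      omega
  · rintro r' ⟨hr'n, hr'⟩
    by_contra hne
    rcases lt_or_gt_of_ne hne with hlt | hgt
    · -- r' < r
      have ht := hr' (r - r') (by omega) (by omega)
      rw [hG] at ht
      have h1 : r' + (r - r') = r := by omega
      rw [h1, hrμ] at ht
      have h2 := hmin r' hr'n
      have : S r' = μ := by omega
      exact (Nat.find_min hex hlt) ⟨hr'n, this⟩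
    · -- r' > r
      have ht := hr' (r + n - r') (by omega) (by omega)
      rw [hG] at ht
      have h1 : r' + (r + n - r') = r + n := by omega
      rw [h1, hperiod, hrμ] at ht
      have h2 := hmin r' hr'n
      omega
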